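/- Elliptic estimate on a finite connected weighted graph: there exists a constant C₁ depending only on the graph (V, ω, m) such that for every function u : V → ℝ, max_{x∈V} u(x) - min_{x∈V} u(x) ≤ C₁ · max_{x∈V} |Δu(x)|. -/

import Mathlib

/-- The weighted graph Laplacian. -/
noncomputable def graphLap {V : Type*} [Fintype V] (m : V → ℝ) (ω : V → V → ℝ)
    (u : V → ℝ) (x : V) : ℝ :=
  (1 / m x) * ∑ y, ω x y * (u y - u x)

/-- If the Laplacian vanishes everywhere, `u` is constant (by connectedness). -/
lemma lap_zero_const {V : Type*} [Fintype V] [Nonempty V]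
    (m : V → ℝ) (ω : V → V → ℝ)
    (hm : ∀ x, 0 < m x) (hnn : ∀ x y, 0 ≤ ω x y)
    (hconn : ∀ x y : V, Relation.ReflTransGen (fun a b => 0 < ω a b) x y)
    (u : V → ℝ) (hlap : ∀ x, graphLap m ω u x = 0) :
    ∀ x y : V, u x = u y := by
  obtain ⟨x₀, -, hx₀⟩ := Finset.exists_max_image (Finset.univ : Finset V) u
    Finset.univ_nonempty
  have key : ∀ y : V, u y = u x₀ := by
    intro y
    have h := hconn x₀ y
    induction h with
    | refl => rfl
    | tail hab hbc ih =>
      rename_i b c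
      have hsum : ∑ z, ω b z * (u z - u b) = 0 := by
        have h0 := hlap b
        unfold graphLap at h0
        have hmb := (hm b).ne'
        field_simp at h0
        linarith
      have hterm : ∀ z ∈ Finset.univ, ω b z * (u z - u b) ≤ 0 := by
        intro z _
        apply mul_nonpos_of_nonneg_of_nonpos (hnn b z)
        have : u z ≤ u x₀ := hx₀ z (Finset.mem_univ z)
        linarith [ih]
      have hall := (Finset.sum_eq_zero_iff_of_nonpos hterm).mp hsum
      have hc : ω b c * (u c - u b) = 0 := hall c (Finset.mem_univ c)
      have huc : u c - u b = 0 := by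
        rcases mul_eq_zero.mp hc with h | h
        · exact absurd h hbc.ne'
        · exact h
      have : u c = u b := by linarith
      rw [this, ih]
  intro x y
  rw [key x, key y]

/-- elliptic estimate on a finite connected weighted graph. -/
theorem elliptic_estimate {V : Type*} [Fintype V] [Nonempty V]
    (m : V → ℝ) (ω : V → V → ℝ)
    (hm : ∀ x, 0 < m x) (hsym : ∀ x y, ω x y = ω y x)
    (hnn : ∀ x y, 0 ≤ ω x y)
    (hconn : ∀ x y : V, Relation.ReflTransGen (fun a b => 0 < ω a b) x y) :
    ∃ C₁ : ℝ, ∀ u : V → ℝ,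
      Finset.univ.sup' Finset.univ_nonempty u
        - Finset.univ.inf' Finset.univ_nonempty u ≤
      C₁ * Finset.univ.sup' Finset.univ_nonempty (fun x => |graphLap m ω u x|) := by
  classical
  set ne : (Finset.univ : Finset V).Nonempty := Finset.univ_nonempty with hne
  set N : (V → ℝ) → ℝ := fun u => Finset.univ.sup' ne (fun x => |graphLap m ω u x|)
    with hN
  set O : (V → ℝ) → ℝ := fun u => Finset.univ.sup' ne u - Finset.univ.inf' ne u with hO
  have hNnn : ∀ u, 0 ≤ N u := by
    intro u
    obtain ⟨x⟩ := (inferInstance : Nonempty V)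
    simp only [hN]
    exact le_trans (abs_nonneg (graphLap m ω u x))
      (Finset.le_sup' (fun x => |graphLap m ω u x|) (Finset.mem_univ x))
  rcases subsingleton_or_nontrivial V with hsub | hnt
  · refine ⟨1, fun u => ?_⟩
    obtain ⟨x⟩ := (inferInstance : Nonempty V)
    have hs : Finset.univ.sup' ne u = u x := by
      apply le_antisymm
      · exact Finset.sup'_le _ _ (fun y _ => le_of_eq (congrArg u (Subsingleton.elim y x)))
      · exact Finset.le_sup' _ (Finset.mem_univ x)
    have hi : Finset.univ.inf' ne u = u x := by
      apply le_antisymm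
      · exact Finset.inf'_le _ (Finset.mem_univ x)
      · exact Finset.le_inf' _ _ (fun y _ => le_of_eq (congrArg u (Subsingleton.elim x y)))
    have h0 := hNnn u
    simp only [hN] at h0
    rw [hs, hi]
    linarith
  · obtain ⟨a, b, hab⟩ := (inferInstance : Nontrivial V)
    set K : Set (V → ℝ) := {u | (∀ x, u x ∈ Set.Icc (0:ℝ) 1) ∧ O u = 1} with hK
    have hNcont : Continuous N := by
      apply Continuous.finset_sup'_apply
      intro x _
      apply Continuous.abs
      unfold graphLap
      exact continuous_const.mul (continuous_finset_sum _ (fun y _ =>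
        continuous_const.mul ((continuous_apply y).sub (continuous_apply x))))
    have hOcont : Continuous O := by
      apply Continuous.sub
      · exact Continuous.finset_sup'_apply ne (fun x _ => continuous_apply x)
      · exact Continuous.finset_inf'_apply ne (fun x _ => continuous_apply x)
    have hKcompact : IsCompact K := by
      have hKeq : K = (Set.univ.pi fun _ : V => Set.Icc (0:ℝ) 1) ∩ O ⁻¹' {1} := by
        ext u
        constructor
        · rintro ⟨h1, h2⟩
          exact ⟨fun x _ => h1 x, h2⟩
        · rintro ⟨h1, h2⟩
          exact ⟨fun x => h1 x (Set.mem_univ x), h2⟩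
      apply IsCompact.of_isClosed_subset
        (isCompact_univ_pi (fun _ : V => isCompact_Icc (a := (0:ℝ)) (b := 1)))
      · rw [hKeq]
        exact (isClosed_set_pi (fun x _ => isClosed_Icc)).inter
          (isClosed_singleton.preimage hOcont)
      · rw [hKeq]; exact Set.inter_subset_left
    have hKne : K.Nonempty := by
      refine ⟨fun x => if x = a then 1 else 0, ?_, ?_⟩
      · intro x
        by_cases h : x = a <;> simp [h]
      · have h1 : Finset.univ.sup' ne (fun x => if x = a then (1:ℝ) else 0) = 1 := by
          apply le_antisymm
          · apply Finset.sup'_le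
            intro x _
            by_cases h : x = a <;> simp [h]
          · have := Finset.le_sup' (f := fun x => if x = a then (1:ℝ) else 0)
              (b := a) (Finset.mem_univ a)
            exact le_trans (le_of_eq (by simp)) this
        have h0 : Finset.univ.inf' ne (fun x => if x = a then (1:ℝ) else 0) = 0 := by
          apply le_antisymm
          · exact le_trans (Finset.inf'_le _ (Finset.mem_univ b)) (by simp [Ne.symm hab])
          · apply Finset.le_inf'
            intro x _
            by_cases h : x = a <;> simp [h]
        show Finset.univ.sup' ne (fun x => if x = a then (1:ℝ) else 0)
          - Finset.univ.inf' ne (fun x => if x = a then (1:ℝ) else 0) = 1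
        rw [h1, h0]; ring
    obtain ⟨u₀, hu₀K, hu₀min⟩ := hKcompact.exists_isMinOn hKne hNcont.continuousOn
    set eps := N u₀ with heps
    have heps_pos : 0 < eps := by
      rcases lt_or_eq_of_le (hNnn u₀) with h | h
      · exact h
      · exfalso
        have hlap : ∀ x, graphLap m ω u₀ x = 0 := by
          intro x
          have hle : |graphLap m ω u₀ x| ≤ N u₀ := by
            simp only [hN]
            exact Finset.le_sup' (fun x => |graphLap m ω u₀ x|) (Finset.mem_univ x)
          rw [← h] at hle
          exact abs_eq_zero.mp (le_antisymm hle (abs_nonneg _))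
        have hconst := lap_zero_const m ω hm hnn hconn u₀ hlap
        obtain ⟨x⟩ := (inferInstance : Nonempty V)
        have hs : Finset.univ.sup' ne u₀ = u₀ x := le_antisymm
          (Finset.sup'_le _ _ (fun y _ => le_of_eq (hconst y x)))
          (Finset.le_sup' _ (Finset.mem_univ x))
        have hi : Finset.univ.inf' ne u₀ = u₀ x := le_antisymm
          (Finset.inf'_le _ (Finset.mem_univ x))
          (Finset.le_inf' _ _ (fun y _ => le_of_eq (hconst x y)))
        have hO0 : O u₀ = 0 := by
          show Finset.univ.sup' ne u₀ - Finset.univ.inf' ne u₀ = 0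
          rw [hs, hi]; ring
        rw [hu₀K.2] at hO0
        norm_num at hO0
    refine ⟨1 / eps, fun u => ?_⟩
    set c := O u with hc
    rcases le_or_gt c 0 with hc0 | hc0
    · have hOle : Finset.univ.sup' ne u - Finset.univ.inf' ne u ≤ 0 := hc0
      have hR : (0:ℝ) ≤ 1 / eps * Finset.univ.sup' ne (fun x => |graphLap m ω u x|) :=
        mul_nonneg (by positivity) (by simpa only [hN] using hNnn u)
      linarith
    · set i := Finset.univ.inf' ne u with hi
      set v : V → ℝ := fun x => (u x - i) / c with hv
      have hvx : ∀ x, 0 ≤ v x ∧ v x ≤ 1 := by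
        intro x
        constructor
        · apply div_nonneg _ hc0.le
          have : i ≤ u x := Finset.inf'_le _ (Finset.mem_univ x)
          linarith
        · show (u x - i) / c ≤ 1
          rw [div_le_one hc0]
          have h1 : u x ≤ Finset.univ.sup' ne u := Finset.le_sup' _ (Finset.mem_univ x)
          have h2 : c = Finset.univ.sup' ne u - i := rfl
          linarith
      have hvK : v ∈ K := by
        refine ⟨fun x => ⟨(hvx x).1, (hvx x).2⟩, ?_⟩
        obtain ⟨xM, -, hxM⟩ := Finset.exists_mem_eq_sup' ne u
        obtain ⟨xm, -, hxm⟩ := Finset.exists_mem_eq_inf' ne u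
        have hsv : Finset.univ.sup' ne v = 1 := by
          apply le_antisymm
          · exact Finset.sup'_le _ _ (fun x _ => (hvx x).2)
          · have h1 : v xM = 1 := by
              show (u xM - i) / c = 1
              rw [div_eq_one_iff_eq hc0.ne']
              show u xM - i = Finset.univ.sup' ne u - Finset.univ.inf' ne u
              rw [hxM]
            rw [← h1]
            exact Finset.le_sup' _ (Finset.mem_univ xM)
        have hiv : Finset.univ.inf' ne v = 0 := by
          apply le_antisymm
          · have h0 : v xm = 0 := by
              show (u xm - i) / c = 0
              rw [div_eq_zero_iff]
              left
              show u xm - Finset.univ.inf' ne u = 0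
              rw [hxm]; ring
            rw [← h0]
            exact Finset.inf'_le _ (Finset.mem_univ xm)
          · exact Finset.le_inf' _ _ (fun x _ => (hvx x).1)
        show Finset.univ.sup' ne v - Finset.univ.inf' ne v = 1
        rw [hsv, hiv]; ring
      have hlapv : ∀ x, graphLap m ω v x = graphLap m ω u x / c := by
        intro x
        unfold graphLap
        have h1 : ∀ y, v y - v x = (u y - u x) / c := by
          intro y
          show (u y - i) / c - (u x - i) / c = (u y - u x) / c
          rw [div_sub_div_same]
          congr 1
          ring
        have h2 : ∑ y, ω x y * ((u y - u x) / c) = (∑ y, ω x y * (u y - u x)) / c := by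
          rw [Finset.sum_div]
          exact Finset.sum_congr rfl (fun y _ => (mul_div_assoc _ _ _).symm)
        simp only [h1, h2, mul_div_assoc]
      have hNv : N v ≤ N u / c := by
        simp only [hN]
        apply Finset.sup'_le
        intro x _
        rw [hlapv x, abs_div, abs_of_pos hc0]
        gcongr
        exact Finset.le_sup' (fun x => |graphLap m ω u x|) (Finset.mem_univ x)
      have hmin : eps ≤ N v := hu₀min hvK
      have hthis : eps ≤ N u / c := hmin.trans hNv
      have hfin : c ≤ 1 / eps * N u := by
        rw [le_div_iff₀ hc0] at hthis
        calc c = 1 / eps * (eps * c) := by field_simp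
          _ ≤ 1 / eps * N u := mul_le_mul_of_nonneg_left hthis (by positivity)
      exact hfin
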